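/- arXiv:2505.23431 — 3 statements merged into one kernel-verified Lean document; each statement's English description precedes it below -/
import Mathlib

section
/- There is no constant c > 0, independent of k and of the complexity of the curves, such that d_kDTW(σ,τ) ≤ c · (d_kDTW(σ,υ) + d_kDTW(υ,τ)) holds for all triples of polygonal curves σ, τ, υ in ℝ^d. -/
open List

/-- A (monotone) traversal of two curves with `m'` and `m''` vertices:
a sequence of (0-based) index pairs starting at `(0,0)`, ending at `(m'-1, m''-1)`,
where each pair is followed by one that increments at least one index by one. -/
def IsTraversal (m' m'' : ℕ) (T : List (ℕ × ℕ)) : Prop :=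
  T ≠ [] ∧ T.head? = some (0, 0) ∧ T.getLast? = some (m' - 1, m'' - 1) ∧
  (∀ p ∈ T, p.1 < m' ∧ p.2 < m'') ∧
  T.Chain' (fun a b => b = (a.1 + 1, a.2) ∨ b = (a.1, a.2 + 1) ∨ b = (a.1 + 1, a.2 + 1))

/-- Sum of the `k` largest entries of a list of reals (zero-padded if the list is shorter). -/
noncomputable def topkSum (k : ℕ) (l : List ℝ) : ℝ :=
  ((l.insertionSort (· ≥ ·)).take k).sum

/-- The list of matched distances of a traversal. -/
def matchedDists {E : Type*} [PseudoMetricSpace E] (σ τ : ℕ → E) (T : List (ℕ × ℕ)) :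
    List ℝ :=
  T.map fun p => dist (σ p.1) (τ p.2)

/-- The `k`-DTW distance of curves `σ` (complexity `m'`) and `τ` (complexity `m''`). -/
noncomputable def kDTW {E : Type*} [PseudoMetricSpace E] (k : ℕ) (σ τ : ℕ → E)
    (m' m'' : ℕ) : ℝ :=
  sInf {x | ∃ T, IsTraversal m' m'' T ∧ x = topkSum k (matchedDists σ τ T)}

/-- The DTW distance. -/
noncomputable def DTW {E : Type*} [PseudoMetricSpace E] (σ τ : ℕ → E) (m' m'' : ℕ) : ℝ :=
  sInf {x | ∃ T, IsTraversal m' m'' T ∧ x = (matchedDists σ τ T).sum}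

/-- The discrete Fréchet distance. -/
noncomputable def discreteFrechet {E : Type*} [PseudoMetricSpace E] (σ τ : ℕ → E)
    (m' m'' : ℕ) : ℝ :=
  sInf {x | ∃ T, IsTraversal m' m'' T ∧ x = (matchedDists σ τ T).foldr max 0}


section Aux

/-- step relation of traversals -/
private def TStep (a b : ℕ × ℕ) : Prop :=
  b = (a.1 + 1, a.2) ∨ b = (a.1, a.2 + 1) ∨ b = (a.1 + 1, a.2 + 1)

lemma topkSum_nonneg' (k : ℕ) (l : List ℝ) (h : ∀ x ∈ l, 0 ≤ x) : 0 ≤ topkSum k l := by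
  apply List.sum_nonneg
  intro x hx
  exact h x ((List.perm_insertionSort (· ≥ ·) l).mem_iff.mp (List.mem_of_mem_take hx))

lemma topkSum_le_sum' (k : ℕ) (l : List ℝ) (h : ∀ x ∈ l, 0 ≤ x) : topkSum k l ≤ l.sum := by
  set s := l.insertionSort (· ≥ ·) with hs
  have hperm : s.Perm l := List.perm_insertionSort _ l
  have h1 : (s.take k).sum + (s.drop k).sum = s.sum := List.sum_take_add_sum_drop s k
  have h2 : 0 ≤ (s.drop k).sum := by
    apply List.sum_nonneg
    intro x hx
    exact h x (hperm.mem_iff.mp (List.mem_of_mem_drop hx))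
  have h3 : s.sum = l.sum := hperm.sum_eq
  unfold topkSum
  rw [← hs]
  linarith

lemma topkSum_all_one (k : ℕ) (l : List ℝ) (h1 : ∀ x ∈ l, x = 1) (h2 : k ≤ l.length) :
    topkSum k l = k := by
  set s := l.insertionSort (· ≥ ·) with hs
  have hperm : s.Perm l := List.perm_insertionSort _ l
  have hlen : (s.take k).length = k := by
    rw [List.length_take, hperm.length_eq]
    omega
  have hall : ∀ x ∈ s.take k, x = 1 := fun x hx =>
    h1 x (hperm.mem_iff.mp (List.mem_of_mem_take hx))
  have : s.take k = List.replicate k (1 : ℝ) := List.eq_replicate_iff.mpr ⟨hlen, hall⟩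
  unfold topkSum
  rw [← hs, this, List.sum_replicate, nsmul_eq_mul, mul_one]

lemma chain_last_fst_le (T : List (ℕ × ℕ)) :
    ∀ a : ℕ × ℕ, List.Chain TStep a T → ∀ b ∈ (a :: T).getLast?, b.1 ≤ a.1 + T.length := by
  induction T with
  | nil => intro a _ b hb; simp at hb; simp [hb]
  | cons x T ih =>
    intro a hc b hb
    replace hc : TStep a x ∧ List.Chain TStep x T := List.isChain_cons_cons.mp hc
    have hx : x.1 ≤ a.1 + 1 := by
      rcases hc.1 with h | h | h <;> simp [h]
    have hb' : b ∈ (x :: T).getLast? := by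
      rwa [List.getLast?_cons_cons] at hb
    have := ih x hc.2 b hb'
    simp only [List.length_cons]
    omega

lemma isTraversal_length_ge {n : ℕ} {T : List (ℕ × ℕ)} (hn : 1 ≤ n)
    (h : IsTraversal n n T) : n ≤ T.length := by
  obtain ⟨hne, hhead, hlast, _, hchain⟩ := h
  obtain ⟨a, T', rfl⟩ := List.exists_cons_of_ne_nil hne
  have ha : a = (0, 0) := by simpa using hhead
  have hchain' : List.Chain TStep a T' := hchain
  have := chain_last_fst_le T' a hchain' (n - 1, n - 1) (by rw [hlast]; rfl)
  subst ha
  simp only [List.length_cons]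
  omega

lemma isTraversal_of_fn (m' m'' N : ℕ) (f : ℕ → ℕ × ℕ)
    (h0 : f 0 = (0, 0)) (hN : f N = (m' - 1, m'' - 1))
    (hmem : ∀ i ≤ N, (f i).1 < m' ∧ (f i).2 < m'')
    (hstep : ∀ i < N, TStep (f i) (f (i + 1))) :
    IsTraversal m' m'' ((List.range (N + 1)).map f) := by
  refine ⟨by simp, ?_, ?_, ?_, ?_⟩
  · rw [List.head?_map, List.range_succ_eq_map]
    simp [h0]
  · rw [List.range_succ, List.map_append]
    simp [hN]
  · intro p hp
    simp only [List.mem_map, List.mem_range] at hp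
    obtain ⟨i, hi, rfl⟩ := hp
    exact hmem i (by omega)
  · show List.IsChain _ _
    rw [List.isChain_map]
    exact (List.isChain_range_succ _ N).mpr hstep

end Aux

lemma matchedDists_nonneg {E : Type*} [PseudoMetricSpace E] (σ τ : ℕ → E) (T : List (ℕ × ℕ)) :
    ∀ x ∈ matchedDists σ τ T, 0 ≤ x := by
  intro x hx
  simp only [matchedDists, List.mem_map] at hx
  obtain ⟨p, _, rfl⟩ := hx
  exact dist_nonneg

lemma kDTW_le_of_traversal {E : Type*} [PseudoMetricSpace E] (k : ℕ) (σ τ : ℕ → E)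
    (m' m'' : ℕ) {T : List (ℕ × ℕ)} (hT : IsTraversal m' m'' T) :
    kDTW k σ τ m' m'' ≤ topkSum k (matchedDists σ τ T) := by
  apply csInf_le
  · refine ⟨0, ?_⟩
    rintro x ⟨T', _, rfl⟩
    exact topkSum_nonneg' _ _ (matchedDists_nonneg σ τ T')
  · exact ⟨T, hT, rfl⟩

lemma kDTW_nonneg {E : Type*} [PseudoMetricSpace E] (k : ℕ) (σ τ : ℕ → E) (m' m'' : ℕ) :
    0 ≤ kDTW k σ τ m' m'' := by
  apply Real.sInf_nonneg
  rintro x ⟨T, _, rfl⟩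
  exact topkSum_nonneg' _ _ (matchedDists_nonneg σ τ T)

/-- there is no constant `c > 0`, independent of `k` and of the complexities,
such that `d_kDTW(σ,τ) ≤ c (d_kDTW(σ,υ) + d_kDTW(υ,τ))` for all triples of curves in `ℝ^d`. -/
theorem kDTW_no_constant_triangle (d : ℕ) (hd : 1 ≤ d) :
    ¬ ∃ c : ℝ, 0 < c ∧
      ∀ (k m₁ m₂ m₃ : ℕ), 1 ≤ k → 1 ≤ m₁ → 1 ≤ m₂ → 1 ≤ m₃ →
        ∀ σ τ υ : ℕ → EuclideanSpace ℝ (Fin d),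
          kDTW k σ τ m₁ m₃ ≤ c * (kDTW k σ υ m₁ m₂ + kDTW k υ τ m₂ m₃) := by
  rintro ⟨c, hc, H⟩
  set n : ℕ := ⌈2 * c⌉₊ + 1 with hn
  have hn1 : 1 ≤ n := by omega
  have hnc : 2 * c < (n : ℝ) := by
    have h1 : 2 * c ≤ (⌈2 * c⌉₊ : ℝ) := Nat.le_ceil _
    have h2 : ((⌈2 * c⌉₊ : ℕ) : ℝ) < (n : ℝ) := by exact_mod_cast Nat.lt_succ_self _
    linarith
  set e : EuclideanSpace ℝ (Fin d) := EuclideanSpace.single ⟨0, hd⟩ 1 with he_def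
  have he : dist (0 : EuclideanSpace ℝ (Fin d)) e = 1 := by
    rw [dist_comm, dist_zero_right, he_def, EuclideanSpace.norm_single]
    norm_num
  set σ : ℕ → EuclideanSpace ℝ (Fin d) := fun _ => 0 with hσ
  set τ : ℕ → EuclideanSpace ℝ (Fin d) := fun _ => e with hτ
  set υ : ℕ → EuclideanSpace ℝ (Fin d) := fun j => if j = 0 then 0 else e with hυ
  -- traversal σ–υ
  have hT1 : IsTraversal n 2 ((List.range (n + 1)).map
      (fun i => if i < n then (i, 0) else (n - 1, 1))) := by
    apply isTraversal_of_fn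
    · simp [hn1]
    · simp
    · intro i hi
      split <;> simp <;> omega
    · intro i hi
      simp only [hi, if_pos]
      by_cases h : i + 1 < n
      · rw [if_pos h]; left; rfl
      · rw [if_neg h]
        have : i = n - 1 := by omega
        subst this
        right; left; rfl
  -- traversal υ–τ
  have hT2 : IsTraversal 2 n ((List.range (n + 1)).map
      (fun j => if j = 0 then (0, 0) else (1, j - 1))) := by
    apply isTraversal_of_fn
    · simp
    · rw [if_neg (by omega : ¬ n = 0)]
    · intro j hj
      split <;> simp <;> omega
    · intro j hj
      by_cases h : j = 0
      · subst h; simp [TStep]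
      · rw [if_neg h, if_neg (by omega : ¬ j + 1 = 0)]
        right; left
        have : j + 1 - 1 = (j - 1) + 1 := by omega
        rw [this]
  -- diagonal traversal σ–τ
  have hT3 : IsTraversal n n ((List.range ((n - 1) + 1)).map (fun i => (i, i))) := by
    apply isTraversal_of_fn
    · rfl
    · rfl
    · intro i hi; constructor <;> omega
    · intro i hi; right; right; rfl
  -- kDTW σ υ ≤ 1
  have hσυ : kDTW n σ υ n 2 ≤ 1 := by
    refine le_trans (kDTW_le_of_traversal n σ υ n 2 hT1) ?_
    refine le_trans (topkSum_le_sum' _ _ (matchedDists_nonneg _ _ _)) ?_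
    have heq : matchedDists σ υ ((List.range (n + 1)).map
        (fun i => if i < n then (i, 0) else (n - 1, 1))) =
        (List.range (n + 1)).map (fun i => if i < n then (0 : ℝ) else 1) := by
      simp only [matchedDists, List.map_map]
      apply List.map_congr_left
      intro i hi
      simp only [Function.comp_apply]
      by_cases h : i < n
      · simp [h, hσ, hυ]
      · simp [h, hσ, hυ, he]
    rw [heq, List.range_succ, List.map_append, List.sum_append]
    have : ((List.range n).map (fun i => if i < n then (0 : ℝ) else 1)).sum = 0 := by
      apply List.sum_eq_zero
      intro x hx
      simp only [List.mem_map, List.mem_range] at hx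
      obtain ⟨i, hi, rfl⟩ := hx
      simp [hi]
    rw [this]
    simp
  -- kDTW υ τ ≤ 1
  have hυτ : kDTW n υ τ 2 n ≤ 1 := by
    refine le_trans (kDTW_le_of_traversal n υ τ 2 n hT2) ?_
    refine le_trans (topkSum_le_sum' _ _ (matchedDists_nonneg _ _ _)) ?_
    have heq : matchedDists υ τ ((List.range (n + 1)).map
        (fun j => if j = 0 then (0, 0) else (1, j - 1))) =
        (List.range (n + 1)).map (fun j => if j = 0 then (1 : ℝ) else 0) := by
      simp only [matchedDists, List.map_map]
      apply List.map_congr_left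
      intro j hj
      simp only [Function.comp_apply]
      by_cases h : j = 0
      · simp [h, hυ, hτ, he]
      · simp [h, hυ, hτ]
    rw [heq, List.range_succ_eq_map, List.map_cons, List.sum_cons, List.map_map]
    have h0 : ((List.range n).map ((fun j : ℕ => if j = 0 then (1 : ℝ) else 0) ∘ Nat.succ)).sum = 0 := by
      apply List.sum_eq_zero
      intro x hx
      simp only [List.mem_map, List.mem_range, Function.comp_apply] at hx
      obtain ⟨i, hi, rfl⟩ := hx
      simp
    rw [h0]
    norm_num
  -- kDTW σ τ ≥ n
  have hστ : (n : ℝ) ≤ kDTW n σ τ n n := by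
    apply le_csInf
    · exact ⟨_, ⟨_, hT3, rfl⟩⟩
    · rintro x ⟨T, hT, rfl⟩
      have hall : ∀ y ∈ matchedDists σ τ T, y = 1 := by
        intro y hy
        simp only [matchedDists, List.mem_map] at hy
        obtain ⟨p, _, rfl⟩ := hy
        simp [hσ, hτ, he]
      have hlen : n ≤ (matchedDists σ τ T).length := by
        simp only [matchedDists, List.length_map]
        exact isTraversal_length_ge hn1 hT
      rw [topkSum_all_one n _ hall hlen]
  have hfinal := H n n 2 n hn1 hn1 (by omega) hn1 σ τ υ
  have hsum : kDTW n σ υ n 2 + kDTW n υ τ 2 n ≤ 2 := by linarith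
  have : c * (kDTW n σ υ n 2 + kDTW n υ τ 2 n) ≤ c * 2 :=
    mul_le_mul_of_nonneg_left hsum (le_of_lt hc)
  linarith
end

section
/- The generalized DTW distance with q ∈ [1,∞) satisfies a relaxed triangle inequality with factor m^{1/q}: if curves σ, τ, υ all have complexity m, then d_{DTW_q}(σ,τ) ≤ m^{1/q} · (d_{DTW_q}(σ,υ) + d_{DTW_q}(υ,τ)). -/
open List

/-- The `DTW_q` distance: minimum over traversals of the `ℓ_q`-norm of matched distances. -/
noncomputable def DTWq {E : Type*} [PseudoMetricSpace E] (q : ℝ) (σ τ : ℕ → E)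
    (m' m'' : ℕ) : ℝ :=
  sInf {x | ∃ T, IsTraversal m' m'' T ∧
    x = ((matchedDists σ τ T).map fun t => t ^ q).sum ^ (1 / q)}

theorem chain'_cons {α : Type*} {R : α → α → Prop} {x y : α} {l : List α} :
    Chain' R (x :: y :: l) ↔ R x y ∧ Chain' R (y :: l) := isChain_cons_cons

theorem chain'_cons' {α : Type*} {R : α → α → Prop} {x : α} {l : List α} :
    Chain' R (x :: l) ↔ (∀ y ∈ head? l, R x y) ∧ Chain' R l := isChain_cons

theorem chain'_map {α β : Type*} {R : α → α → Prop} (f : β → α) {l : List β} :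
    Chain' R (map f l) ↔ Chain' (fun a b : β => R (f a) (f b)) l := isChain_map f

theorem chain'_range_succ (r : ℕ → ℕ → Prop) (n : ℕ) :
    Chain' r (range n.succ) ↔ ∀ m < n, r m m.succ := isChain_range_succ r n

@[simp] theorem chain'_nil {α : Type*} {R : α → α → Prop} : Chain' R [] := isChain_nil

@[simp] theorem chain'_singleton {α : Type*} {R : α → α → Prop} (a : α) : Chain' R [a] :=
  isChain_singleton a

def Step (a b : ℕ × ℕ) : Prop :=
  b = (a.1 + 1, a.2) ∨ b = (a.1, a.2 + 1) ∨ b = (a.1 + 1, a.2 + 1)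

def comp : List (ℕ × ℕ) → List (ℕ × ℕ) → List (ℕ × ℕ × ℕ)
  | p :: p' :: ps, r :: r' :: rs =>
      (p.1, p.2, r.2) ::
      (if p'.2 = p.2 then comp (p' :: ps) (r :: r' :: rs)
       else if r'.1 = r.1 then comp (p :: p' :: ps) (r' :: rs)
       else comp (p' :: ps) (r' :: rs))
  | p :: p' :: ps, [r] => (p.1, p.2, r.2) :: comp (p' :: ps) [r]
  | [p], r :: r' :: rs => (p.1, p.2, r.2) :: comp [p] (r' :: rs)
  | [p], [r] => [(p.1, p.2, r.2)]
  | [], _ => []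
  | _, [] => []
termination_by T1 T2 => T1.length + T2.length

lemma comp_cons (p : ℕ × ℕ) (ps : List (ℕ × ℕ)) (r : ℕ × ℕ) (rs : List (ℕ × ℕ)) :
    ∃ L, comp (p :: ps) (r :: rs) = (p.1, p.2, r.2) :: L := by
  cases ps <;> cases rs <;> simp only [comp]
  · exact ⟨_, rfl⟩
  · exact ⟨_, rfl⟩
  · exact ⟨_, rfl⟩
  · exact ⟨_, rfl⟩

lemma comp_head? (p : ℕ × ℕ) (ps : List (ℕ × ℕ)) (r : ℕ × ℕ) (rs : List (ℕ × ℕ)) :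
    (comp (p :: ps) (r :: rs)).head? = some (p.1, p.2, r.2) := by
  obtain ⟨L, hL⟩ := comp_cons p ps r rs; rw [hL]; rfl

lemma comp_ne_nil (p : ℕ × ℕ) (ps : List (ℕ × ℕ)) (r : ℕ × ℕ) (rs : List (ℕ × ℕ)) :
    comp (p :: ps) (r :: rs) ≠ [] := by
  obtain ⟨L, hL⟩ := comp_cons p ps r rs; rw [hL]; simp

lemma getLast?_cons_of_ne_nil {α : Type*} (a : α) {l : List α} (h : l ≠ []) :
    (a :: l).getLast? = l.getLast? := by
  cases l with
  | nil => exact absurd rfl h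
  | cons b l => rw [getLast?_cons_cons]

lemma comp_getLast? : ∀ T1 T2 : List (ℕ × ℕ), ∀ p r : ℕ × ℕ,
    T1.getLast? = some p → T2.getLast? = some r →
    ∃ k, (comp T1 T2).getLast? = some (p.1, k, r.2) := by
  intro T1 T2
  induction T1, T2 using comp.induct with
  | case1 p p' ps r r' rs ih1 ih2 ih3 =>
    intro pp rr hp hr
    rw [getLast?_cons_cons] at hp hr
    simp only [comp]
    split
    · obtain ⟨k, hk⟩ := ih1 pp rr hp (by rw [getLast?_cons_cons]; exact hr)
      exact ⟨k, by rw [getLast?_cons_of_ne_nil _ (comp_ne_nil _ _ _ _), hk]⟩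
    · split
      · obtain ⟨k, hk⟩ := ih2 pp rr (by rw [getLast?_cons_cons]; exact hp) hr
        exact ⟨k, by rw [getLast?_cons_of_ne_nil _ (comp_ne_nil _ _ _ _), hk]⟩
      · obtain ⟨k, hk⟩ := ih3 pp rr hp hr
        exact ⟨k, by rw [getLast?_cons_of_ne_nil _ (comp_ne_nil _ _ _ _), hk]⟩
  | case2 p p' ps r ih =>
    intro pp rr hp hr
    rw [getLast?_cons_cons] at hp
    simp only [comp]
    obtain ⟨k, hk⟩ := ih pp rr hp hr
    exact ⟨k, by rw [getLast?_cons_of_ne_nil _ (comp_ne_nil _ _ _ _), hk]⟩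
  | case3 p r r' rs ih =>
    intro pp rr hp hr
    rw [getLast?_cons_cons] at hr
    simp only [comp]
    obtain ⟨k, hk⟩ := ih pp rr hp hr
    exact ⟨k, by rw [getLast?_cons_of_ne_nil _ (comp_ne_nil _ _ _ _), hk]⟩
  | case4 p r =>
    intro pp rr hp hr
    simp only [getLast?_singleton, Option.some_inj] at hp hr
    subst hp; subst hr
    exact ⟨p.2, by simp [comp]⟩
  | case5 x => intro pp rr hp hr; simp at hp
  | case6 x hx =>
    intro pp rr hp hr
    simp at hr

lemma comp_mem : ∀ T1 T2 : List (ℕ × ℕ), ∀ t ∈ comp T1 T2,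
    (∃ p ∈ T1, t.1 = p.1) ∧ (∃ r ∈ T2, t.2.2 = r.2) := by
  intro T1 T2
  induction T1, T2 using comp.induct with
  | case1 p p' ps r r' rs ih1 ih2 ih3 =>
    intro t ht
    simp only [comp, mem_cons] at ht
    rcases ht with h | h
    · subst h; exact ⟨⟨p, by simp, rfl⟩, ⟨r, by simp, rfl⟩⟩
    · split at h
      · obtain ⟨⟨a, ha, h1⟩, ⟨b, hb, h2⟩⟩ := ih1 t h
        exact ⟨⟨a, by simp [mem_cons] at ha ⊢; tauto, h1⟩, ⟨b, hb, h2⟩⟩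
      · split at h
        · obtain ⟨⟨a, ha, h1⟩, ⟨b, hb, h2⟩⟩ := ih2 t h
          exact ⟨⟨a, ha, h1⟩, ⟨b, by simp [mem_cons] at hb ⊢; tauto, h2⟩⟩
        · obtain ⟨⟨a, ha, h1⟩, ⟨b, hb, h2⟩⟩ := ih3 t h
          exact ⟨⟨a, by simp [mem_cons] at ha ⊢; tauto, h1⟩,
                 ⟨b, by simp [mem_cons] at hb ⊢; tauto, h2⟩⟩
  | case2 p p' ps r ih =>
    intro t ht
    simp only [comp, mem_cons] at ht
    rcases ht with h | h
    · subst h; exact ⟨⟨p, by simp, rfl⟩, ⟨r, by simp, rfl⟩⟩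
    · obtain ⟨⟨a, ha, h1⟩, ⟨b, hb, h2⟩⟩ := ih t h
      exact ⟨⟨a, by simp [mem_cons] at ha ⊢; tauto, h1⟩, ⟨b, hb, h2⟩⟩
  | case3 p r r' rs ih =>
    intro t ht
    simp only [comp, mem_cons] at ht
    rcases ht with h | h
    · subst h; exact ⟨⟨p, by simp, rfl⟩, ⟨r, by simp, rfl⟩⟩
    · obtain ⟨⟨a, ha, h1⟩, ⟨b, hb, h2⟩⟩ := ih t h
      exact ⟨⟨a, ha, h1⟩, ⟨b, by simp [mem_cons] at hb ⊢; tauto, h2⟩⟩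
  | case4 p r =>
    intro t ht
    simp only [comp, mem_singleton] at ht
    subst ht
    exact ⟨⟨p, by simp, rfl⟩, ⟨r, by simp, rfl⟩⟩
  | case5 x => intro t ht; simp [comp] at ht
  | case6 x hx =>
    intro t ht
    cases x with
    | nil => simp [comp] at ht
    | cons a l => simp [comp] at ht
lemma step_or_eq {a b : ℕ × ℕ} (h1 : b.1 = a.1 ∨ b.1 = a.1 + 1)
    (h2 : b.2 = a.2 ∨ b.2 = a.2 + 1) : a = b ∨ Step a b := by
  rcases h1 with h1 | h1 <;> rcases h2 with h2 | h2
  · left; exact Prod.ext h1.symm h2.symm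
  · right; right; left; exact Prod.ext h1 h2
  · right; left; exact Prod.ext h1 h2
  · right; right; right; exact Prod.ext h1 h2

lemma comp_chain' : ∀ T1 T2 : List (ℕ × ℕ), T1.Chain' Step → T2.Chain' Step →
    ((comp T1 T2).map (fun t => (t.1, t.2.2))).Chain' (fun a b => a = b ∨ Step a b) := by
  intro T1 T2
  induction T1, T2 using comp.induct with
  | case1 p p' ps r r' rs ih1 ih2 ih3 =>
    intro h1 h2
    rw [chain'_cons] at h1 h2
    simp only [comp]
    split
    · rename_i hc
      rw [map_cons, chain'_cons']
      refine ⟨?_, ih1 h1.2 (chain'_cons.2 h2)⟩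
      intro y hy
      rw [head?_map, comp_head?] at hy
      simp only [Option.mem_def, Option.map_some, Option.some_inj] at hy
      subst hy
      refine step_or_eq ?_ (Or.inl rfl)
      rcases h1.1 with h | h | h
      · right; rw [h]
      · exfalso; rw [h] at hc; simp at hc
      · exfalso; rw [h] at hc; simp at hc
    · split
      · rename_i hc
        rw [map_cons, chain'_cons']
        refine ⟨?_, ih2 (chain'_cons.2 h1) h2.2⟩
        intro y hy
        rw [head?_map, comp_head?] at hy
        simp only [Option.mem_def, Option.map_some, Option.some_inj] at hy
        subst hy
        refine step_or_eq (Or.inl rfl) ?_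
        rcases h2.1 with h | h | h
        · exfalso; rw [h] at hc; simp at hc
        · right; rw [h]
        · exfalso; rw [h] at hc; simp at hc
      · rw [map_cons, chain'_cons']
        refine ⟨?_, ih3 h1.2 h2.2⟩
        intro y hy
        rw [head?_map, comp_head?] at hy
        simp only [Option.mem_def, Option.map_some, Option.some_inj] at hy
        subst hy
        refine step_or_eq ?_ ?_
        · rcases h1.1 with h | h | h <;> rw [h] <;> simp
        · rcases h2.1 with h | h | h <;> rw [h] <;> simp
  | case2 p p' ps r ih =>
    intro h1 h2
    rw [chain'_cons] at h1
    simp only [comp]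
    rw [map_cons, chain'_cons']
    refine ⟨?_, ih h1.2 h2⟩
    intro y hy
    rw [head?_map, comp_head?] at hy
    simp only [Option.mem_def, Option.map_some, Option.some_inj] at hy
    subst hy
    refine step_or_eq ?_ (Or.inl rfl)
    rcases h1.1 with h | h | h <;> rw [h] <;> simp
  | case3 p r r' rs ih =>
    intro h1 h2
    rw [chain'_cons] at h2
    simp only [comp]
    rw [map_cons, chain'_cons']
    refine ⟨?_, ih h1 h2.2⟩
    intro y hy
    rw [head?_map, comp_head?] at hy
    simp only [Option.mem_def, Option.map_some, Option.some_inj] at hy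
    subst hy
    refine step_or_eq (Or.inl rfl) ?_
    rcases h2.1 with h | h | h <;> rw [h] <;> simp
  | case4 p r => intro h1 h2; simp [comp]
  | case5 x => intro h1 h2; simp [comp]
  | case6 x hx =>
    intro h1 h2
    cases x with
    | nil => simp [comp]
    | cons a l => simp [comp]
lemma step_fst {a b : ℕ × ℕ} (h : Step a b) : b.1 = a.1 ∨ b.1 = a.1 + 1 := by
  rcases h with h | h | h <;> rw [h] <;> simp

lemma step_snd {a b : ℕ × ℕ} (h : Step a b) : b.2 = a.2 ∨ b.2 = a.2 + 1 := by
  rcases h with h | h | h <;> rw [h] <;> simp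

lemma step_of_snd_eq {a b : ℕ × ℕ} (h : Step a b) (h2 : b.2 = a.2) : b = (a.1 + 1, a.2) := by
  rcases h with h | h | h
  · exact h
  · rw [h] at h2; simp at h2
  · rw [h] at h2; simp at h2

lemma step_of_fst_eq {a b : ℕ × ℕ} (h : Step a b) (h2 : b.1 = a.1) : b = (a.1, a.2 + 1) := by
  rcases h with h | h | h
  · rw [h] at h2; simp at h2
  · exact h
  · rw [h] at h2; simp at h2

lemma comp_sumA (f : ℕ × ℕ → ℝ) (hf : ∀ x, 0 ≤ f x) (m : ℕ) :
    ∀ T1 T2 : List (ℕ × ℕ),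
    T1.Chain' Step → T2.Chain' Step →
    (∀ x ∈ T1, x.1 < m ∧ x.2 < m) → (∀ x ∈ T2, x.1 < m ∧ x.2 < m) →
    T1.getLast? = some (m - 1, m - 1) → T2.getLast? = some (m - 1, m - 1) →
    ∀ p r : ℕ × ℕ, T1.head? = some p → T2.head? = some r → p.2 = r.1 →
    ((comp T1 T2).map (fun t => f (t.1, t.2.1))).sum ≤
      (↑(m - r.2) : ℝ) * f p + m * ((T1.tail).map f).sum := by
  intro T1 T2
  induction T1, T2 using comp.induct with
  | case1 p p' ps r r' rs ih1 ih2 ih3 =>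
    intro h1 h2 hb1 hb2 hg1 hg2 pp rr hpp hrr hsync
    simp only [head?_cons, Option.some_inj] at hpp hrr
    subst hpp; subst hrr
    rw [chain'_cons] at h1 h2
    rw [getLast?_cons_cons] at hg1 hg2
    have hr2 : r.2 < m := (hb2 r (by simp)).2
    have hp1m : 1 ≤ (↑(m - r.2) : ℝ) := by
      have : 1 ≤ m - r.2 := by omega
      exact_mod_cast this
    simp only [comp, map_cons, sum_cons, tail_cons, Prod.mk.eta]
    split
    · rename_i hc
      have key := ih1 h1.2 (chain'_cons.2 h2)
        (fun x hx => hb1 x (mem_cons_of_mem _ hx)) hb2 hg1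
        (by rw [getLast?_cons_cons]; exact hg2) p' r rfl rfl (hc.trans hsync)
      rw [tail_cons] at key
      try simp only [map_cons, sum_cons] at key ⊢
      have e1 : f p ≤ (↑(m - r.2) : ℝ) * f p := le_mul_of_one_le_left (hf p) hp1m
      have e2 : (↑(m - r.2) : ℝ) * f p' ≤ ↑m * f p' :=
        mul_le_mul_of_nonneg_right (by exact_mod_cast Nat.sub_le m r.2) (hf p')
      linarith
    · split
      · rename_i hc2
        have hr' : r' = (r.1, r.2 + 1) := step_of_fst_eq h2.1 hc2
        have key := ih2 (chain'_cons.2 h1) h2.2 hb1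
          (fun x hx => hb2 x (mem_cons_of_mem _ hx))
          (by rw [getLast?_cons_cons]; exact hg1) hg2 p r' rfl rfl
          (by rw [hr']; exact hsync)
        rw [tail_cons] at key
        try simp only [map_cons, sum_cons] at key ⊢
        have hcast : (↑(m - r'.2) : ℝ) = ↑(m - r.2) - 1 := by
          rw [hr']
          have : m - r.2 = (m - (r.2 + 1)) + 1 := by omega
          rw [this]; push_cast; ring
        rw [hcast] at key
        linarith
      · rename_i hc hc2
        have hr'2 : r'.2 = r.2 ∨ r'.2 = r.2 + 1 := step_snd h2.1
        have hr'sync : p'.2 = r'.1 := by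
          have h1' : p'.2 = p.2 + 1 := (step_snd h1.1).resolve_left hc
          have h2' : r'.1 = r.1 + 1 := (step_fst h2.1).resolve_left hc2
          omega
        have key := ih3 h1.2 h2.2
          (fun x hx => hb1 x (mem_cons_of_mem _ hx))
          (fun x hx => hb2 x (mem_cons_of_mem _ hx)) hg1 hg2 p' r' rfl rfl hr'sync
        rw [tail_cons] at key
        try simp only [map_cons, sum_cons] at key ⊢
        have e1 : f p ≤ (↑(m - r.2) : ℝ) * f p := le_mul_of_one_le_left (hf p) hp1m
        have e2 : (↑(m - r'.2) : ℝ) * f p' ≤ ↑m * f p' :=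
          mul_le_mul_of_nonneg_right (by exact_mod_cast Nat.sub_le m r'.2) (hf p')
        linarith
  | case2 p p' ps r ih =>
    intro h1 h2 hb1 hb2 hg1 hg2 pp rr hpp hrr hsync
    simp only [head?_cons, Option.some_inj] at hpp hrr
    subst hpp; subst hrr
    rw [chain'_cons] at h1
    rw [getLast?_cons_cons] at hg1
    have hr : r = (m - 1, m - 1) := by
      simpa using hg2
    have hr2 : r.2 < m := (hb2 r (by simp)).2
    have hp1m : 1 ≤ (↑(m - r.2) : ℝ) := by
      have : 1 ≤ m - r.2 := by omega
      exact_mod_cast this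
    have hsync' : p'.2 = r.1 := by
      have hp'2 : p'.2 = p.2 ∨ p'.2 = p.2 + 1 := step_snd h1.1
      have : p'.2 < m := (hb1 p' (by simp)).2
      have : r.1 = m - 1 := by rw [hr]
      omega
    have key := ih h1.2 h2 (fun x hx => hb1 x (mem_cons_of_mem _ hx)) hb2 hg1 hg2
      p' r rfl rfl hsync'
    rw [tail_cons] at key
    simp only [comp, map_cons, sum_cons, tail_cons, Prod.mk.eta]
    try simp only [map_cons, sum_cons] at key ⊢
    have e1 : f p ≤ (↑(m - r.2) : ℝ) * f p := le_mul_of_one_le_left (hf p) hp1m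
    have e2 : (↑(m - r.2) : ℝ) * f p' ≤ ↑m * f p' :=
      mul_le_mul_of_nonneg_right (by exact_mod_cast Nat.sub_le m r.2) (hf p')
    linarith
  | case3 p r r' rs ih =>
    intro h1 h2 hb1 hb2 hg1 hg2 pp rr hpp hrr hsync
    simp only [head?_cons, Option.some_inj] at hpp hrr
    subst hpp; subst hrr
    rw [chain'_cons] at h2
    rw [getLast?_cons_cons] at hg2
    have hp : p = (m - 1, m - 1) := by simpa using hg1
    have hr2 : r.2 < m := (hb2 r (by simp)).2
    have hr' : r' = (r.1, r.2 + 1) := by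
      apply step_of_fst_eq h2.1
      have hr'1 : r'.1 = r.1 ∨ r'.1 = r.1 + 1 := step_fst h2.1
      have : r'.1 < m := (hb2 r' (by simp)).1
      have : r.1 = m - 1 := by rw [← hsync, hp]
      omega
    have key := ih h1 h2.2 hb1 (fun x hx => hb2 x (mem_cons_of_mem _ hx)) hg1 hg2
      p r' rfl rfl (by rw [hr']; exact hsync)
    simp only [tail_cons] at key ⊢
    simp only [comp, map_cons, sum_cons, Prod.mk.eta]
    have hcast : (↑(m - r'.2) : ℝ) = ↑(m - r.2) - 1 := by
      rw [hr']
      have : m - r.2 = (m - (r.2 + 1)) + 1 := by omega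
      rw [this]; push_cast; ring
    rw [hcast] at key
    simp only [map_nil, sum_nil, mul_zero] at key ⊢
    linarith
  | case4 p r =>
    intro h1 h2 hb1 hb2 hg1 hg2 pp rr hpp hrr hsync
    simp only [head?_cons, Option.some_inj] at hpp hrr
    subst hpp; subst hrr
    have hr2 : r.2 < m := (hb2 r (by simp)).2
    have hp1m : 1 ≤ (↑(m - r.2) : ℝ) := by
      have : 1 ≤ m - r.2 := by omega
      exact_mod_cast this
    simp only [comp, map_cons, sum_cons, map_nil, sum_nil, tail_cons, mul_zero, add_zero, Prod.mk.eta]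
    have e1 : f p ≤ (↑(m - r.2) : ℝ) * f p := le_mul_of_one_le_left (hf p) hp1m
    linarith [hf p]
  | case5 x => intro _ _ _ _ _ _ pp rr hpp; simp at hpp
  | case6 x hx => intro _ _ _ _ _ _ pp rr _ hrr; simp at hrr

lemma comp_sumB (f : ℕ × ℕ → ℝ) (hf : ∀ x, 0 ≤ f x) (m : ℕ) :
    ∀ T1 T2 : List (ℕ × ℕ),
    T1.Chain' Step → T2.Chain' Step →
    (∀ x ∈ T1, x.1 < m ∧ x.2 < m) → (∀ x ∈ T2, x.1 < m ∧ x.2 < m) →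
    T1.getLast? = some (m - 1, m - 1) → T2.getLast? = some (m - 1, m - 1) →
    ∀ p r : ℕ × ℕ, T1.head? = some p → T2.head? = some r → p.2 = r.1 →
    ((comp T1 T2).map (fun t => f t.2)).sum ≤
      (↑(m - p.1) : ℝ) * f r + m * ((T2.tail).map f).sum := by
  intro T1 T2
  induction T1, T2 using comp.induct with
  | case1 p p' ps r r' rs ih1 ih2 ih3 =>
    intro h1 h2 hb1 hb2 hg1 hg2 pp rr hpp hrr hsync
    simp only [head?_cons, Option.some_inj] at hpp hrr
    subst hpp; subst hrr
    rw [chain'_cons] at h1 h2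
    rw [getLast?_cons_cons] at hg1 hg2
    have hp1 : p.1 < m := (hb1 p (by simp)).1
    have hp1m : 1 ≤ (↑(m - p.1) : ℝ) := by
      have : 1 ≤ m - p.1 := by omega
      exact_mod_cast this
    have hemit : f (p.2, r.2) = f r := by rw [hsync]
    simp only [comp, map_cons, sum_cons, tail_cons, Prod.mk.eta]
    rw [hemit]
    split
    · rename_i hc
      have hp' : p' = (p.1 + 1, p.2) := step_of_snd_eq h1.1 hc
      have key := ih1 h1.2 (chain'_cons.2 h2)
        (fun x hx => hb1 x (mem_cons_of_mem _ hx)) hb2 hg1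
        (by rw [getLast?_cons_cons]; exact hg2) p' r rfl rfl (hc.trans hsync)
      rw [tail_cons] at key
      try simp only [map_cons, sum_cons] at key ⊢
      have hcast : (↑(m - p'.1) : ℝ) = ↑(m - p.1) - 1 := by
        rw [hp']
        have : m - p.1 = (m - (p.1 + 1)) + 1 := by omega
        rw [this]; push_cast; ring
      rw [hcast] at key
      linarith
    · split
      · rename_i hc2
        have key := ih2 (chain'_cons.2 h1) h2.2 hb1
          (fun x hx => hb2 x (mem_cons_of_mem _ hx))
          (by rw [getLast?_cons_cons]; exact hg1) hg2 p r' rfl rfl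
          (by rw [hc2]; exact hsync)
        rw [tail_cons] at key
        try simp only [map_cons, sum_cons] at key ⊢
        have e1 : f r ≤ (↑(m - p.1) : ℝ) * f r := le_mul_of_one_le_left (hf r) hp1m
        have e2 : (↑(m - p.1) : ℝ) * f r' ≤ ↑m * f r' :=
          mul_le_mul_of_nonneg_right (by exact_mod_cast Nat.sub_le m p.1) (hf r')
        linarith
      · rename_i hc hc2
        have hr'sync : p'.2 = r'.1 := by
          have h1' : p'.2 = p.2 + 1 := (step_snd h1.1).resolve_left hc
          have h2' : r'.1 = r.1 + 1 := (step_fst h2.1).resolve_left hc2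
          omega
        have key := ih3 h1.2 h2.2
          (fun x hx => hb1 x (mem_cons_of_mem _ hx))
          (fun x hx => hb2 x (mem_cons_of_mem _ hx)) hg1 hg2 p' r' rfl rfl hr'sync
        rw [tail_cons] at key
        try simp only [map_cons, sum_cons] at key ⊢
        have e1 : f r ≤ (↑(m - p.1) : ℝ) * f r := le_mul_of_one_le_left (hf r) hp1m
        have e2 : (↑(m - p'.1) : ℝ) * f r' ≤ ↑m * f r' :=
          mul_le_mul_of_nonneg_right (by exact_mod_cast Nat.sub_le m p'.1) (hf r')
        linarith
  | case2 p p' ps r ih =>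
    intro h1 h2 hb1 hb2 hg1 hg2 pp rr hpp hrr hsync
    simp only [head?_cons, Option.some_inj] at hpp hrr
    subst hpp; subst hrr
    rw [chain'_cons] at h1
    rw [getLast?_cons_cons] at hg1
    have hr : r = (m - 1, m - 1) := by simpa using hg2
    have hp1 : p.1 < m := (hb1 p (by simp)).1
    have hemit : f (p.2, r.2) = f r := by rw [hsync]
    have hp' : p' = (p.1 + 1, p.2) := by
      apply step_of_snd_eq h1.1
      have hp'2 : p'.2 = p.2 ∨ p'.2 = p.2 + 1 := step_snd h1.1
      have : p'.2 < m := (hb1 p' (by simp)).2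
      have : r.1 = m - 1 := by rw [hr]
      omega
    have key := ih h1.2 h2 (fun x hx => hb1 x (mem_cons_of_mem _ hx)) hb2 hg1 hg2
      p' r rfl rfl (by rw [hp']; exact hsync)
    simp only [tail_cons] at key ⊢
    simp only [comp, map_cons, sum_cons, Prod.mk.eta]
    rw [hemit]
    have hcast : (↑(m - p'.1) : ℝ) = ↑(m - p.1) - 1 := by
      rw [hp']
      have : m - p.1 = (m - (p.1 + 1)) + 1 := by omega
      rw [this]; push_cast; ring
    rw [hcast] at key
    simp only [map_nil, sum_nil, mul_zero] at key ⊢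
    linarith
  | case3 p r r' rs ih =>
    intro h1 h2 hb1 hb2 hg1 hg2 pp rr hpp hrr hsync
    simp only [head?_cons, Option.some_inj] at hpp hrr
    subst hpp; subst hrr
    rw [chain'_cons] at h2
    rw [getLast?_cons_cons] at hg2
    have hp : p = (m - 1, m - 1) := by simpa using hg1
    have hp1 : p.1 < m := (hb1 p (by simp)).1
    have hp1m : 1 ≤ (↑(m - p.1) : ℝ) := by
      have : 1 ≤ m - p.1 := by omega
      exact_mod_cast this
    have hemit : f (p.2, r.2) = f r := by rw [hsync]
    have hr' : r' = (r.1, r.2 + 1) := by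
      apply step_of_fst_eq h2.1
      have hr'1 : r'.1 = r.1 ∨ r'.1 = r.1 + 1 := step_fst h2.1
      have : r'.1 < m := (hb2 r' (by simp)).1
      have : r.1 = m - 1 := by rw [← hsync, hp]
      omega
    have key := ih h1 h2.2 hb1 (fun x hx => hb2 x (mem_cons_of_mem _ hx)) hg1 hg2
      p r' rfl rfl (by rw [hr']; exact hsync)
    simp only [tail_cons] at key ⊢
    simp only [comp, map_cons, sum_cons, Prod.mk.eta]
    rw [hemit]
    try simp only [map_cons, sum_cons] at key ⊢
    have e1 : f r ≤ (↑(m - p.1) : ℝ) * f r := le_mul_of_one_le_left (hf r) hp1m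
    have e2 : (↑(m - p.1) : ℝ) * f r' ≤ ↑m * f r' :=
      mul_le_mul_of_nonneg_right (by exact_mod_cast Nat.sub_le m p.1) (hf r')
    linarith
  | case4 p r =>
    intro h1 h2 hb1 hb2 hg1 hg2 pp rr hpp hrr hsync
    simp only [head?_cons, Option.some_inj] at hpp hrr
    subst hpp; subst hrr
    have hp1 : p.1 < m := (hb1 p (by simp)).1
    have hp1m : 1 ≤ (↑(m - p.1) : ℝ) := by
      have : 1 ≤ m - p.1 := by omega
      exact_mod_cast this
    have hemit : f (p.2, r.2) = f r := by rw [hsync]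
    simp only [comp, map_cons, sum_cons, map_nil, sum_nil, tail_cons, mul_zero, add_zero,
      Prod.mk.eta]
    rw [hemit]
    have e1 : f r ≤ (↑(m - p.1) : ℝ) * f r := le_mul_of_one_le_left (hf r) hp1m
    linarith [hf r]
  | case5 x => intro _ _ _ _ _ _ pp rr hpp; simp at hpp
  | case6 x hx => intro _ _ _ _ _ _ pp rr _ hrr; simp at hrr

def dd : List (ℕ × ℕ) → List (ℕ × ℕ)
  | [] => []
  | [a] => [a]
  | a :: b :: l => if a = b then dd (b :: l) else a :: dd (b :: l)

lemma dd_sublist : ∀ l, dd l <+ l := by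
  intro l
  induction l using dd.induct with
  | case1 => simp [dd]
  | case2 a => simp [dd]
  | case3 b l ih =>
    simp only [dd, if_true, reduceIte]
    exact ih.trans (sublist_cons_self _ _)
  | case4 a b l h ih =>
    simp only [dd, if_neg h]
    exact ih.cons₂ _

lemma dd_head? : ∀ l, (dd l).head? = l.head? := by
  intro l
  induction l using dd.induct with
  | case1 => rfl
  | case2 a => rfl
  | case3 b l ih => simp only [dd, if_true, reduceIte]; rw [ih]; rfl
  | case4 a b l h ih => simp only [dd, if_neg h]; rfl

lemma dd_ne_nil {l : List (ℕ × ℕ)} (h : l ≠ []) : dd l ≠ [] := by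
  intro hnil
  have := dd_head? l
  rw [hnil] at this
  cases l with
  | nil => exact h rfl
  | cons a l => simp at this

lemma dd_getLast? : ∀ l, (dd l).getLast? = l.getLast? := by
  intro l
  induction l using dd.induct with
  | case1 => rfl
  | case2 a => rfl
  | case3 b l ih => simp only [dd, if_true, reduceIte]; rw [ih, getLast?_cons_cons]
  | case4 a b l h ih =>
    simp only [dd, if_neg h, getLast?_cons_cons]
    rw [← ih]
    obtain ⟨c, L, hcL⟩ : ∃ c L, dd (b :: l) = c :: L := by
      cases hdd : dd (b :: l) with
      | nil => exact absurd hdd (dd_ne_nil (by simp))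
      | cons c L => exact ⟨c, L, rfl⟩
    rw [hcL, getLast?_cons_cons]

lemma dd_chain' (R : ℕ × ℕ → ℕ × ℕ → Prop) :
    ∀ l, l.Chain' (fun a b => a = b ∨ R a b) → (dd l).Chain' R := by
  intro l
  induction l using dd.induct with
  | case1 => intro; simp [dd]
  | case2 a => intro; simp [dd]
  | case3 b l ih =>
    intro hch
    rw [chain'_cons] at hch
    simp only [dd, if_true, reduceIte]
    exact ih hch.2
  | case4 a b l h ih =>
    intro hch
    rw [chain'_cons] at hch
    simp only [dd, if_neg h]
    rw [chain'_cons']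
    refine ⟨?_, ih hch.2⟩
    intro y hy
    rw [dd_head? (b :: l)] at hy
    simp only [head?_cons, Option.mem_def, Option.some_inj] at hy
    subst hy
    exact hch.1.resolve_left h

lemma list_sum_getD (l : List (ℕ × ℕ × ℕ)) (f : ℕ × ℕ × ℕ → ℝ) :
    (l.map f).sum = ∑ i ∈ Finset.range l.length, f (l.getD i (0,0,0)) := by
  induction l with
  | nil => simp
  | cons a l ih => simp [Finset.sum_range_succ', ih, add_comm]

lemma diag_isTraversal (m : ℕ) (hm : 1 ≤ m) :
    IsTraversal m m ((List.range m).map fun i => (i, i)) := by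
  obtain ⟨n, rfl⟩ : ∃ n, m = n + 1 := ⟨m - 1, by omega⟩
  refine ⟨?_, ?_, ?_, ?_, ?_⟩
  · simp [List.range_succ]
  · rw [head?_map, List.range_succ_eq_map]
    rfl
  · rw [getLast?_map, List.range_succ (n := n), getLast?_concat]
    simp
  · intro p hp
    simp only [mem_map, mem_range] at hp
    obtain ⟨i, hi, rfl⟩ := hp
    exact ⟨hi, hi⟩
  · rw [chain'_map, chain'_range_succ]
    intro i _
    right; right; rfl
/-- `DTW_q` satisfies a relaxed triangle inequality with factor `m^{1/q}`
for curves of common complexity `m`. -/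
theorem DTWq_relaxed_triangle {d : ℕ} (q : ℝ) (hq : 1 ≤ q) (m : ℕ) (hm : 1 ≤ m)
    (σ τ υ : ℕ → EuclideanSpace ℝ (Fin d)) :
    DTWq q σ τ m m ≤ (m : ℝ) ^ (1 / q) * (DTWq q σ υ m m + DTWq q υ τ m m) := by
  have hq0 : (0:ℝ) < q := lt_of_lt_of_le one_pos hq
  have h1q : (0:ℝ) ≤ 1 / q := by positivity
  have hm0 : (0:ℝ) < m := by exact_mod_cast hm
  set c : ℝ := (m : ℝ) ^ (1 / q) with hc
  have hcpos : 0 < c := Real.rpow_pos_of_pos hm0 _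
  set S0 : Set ℝ := {x | ∃ T, IsTraversal m m T ∧
    x = ((matchedDists σ τ T).map fun t => t ^ q).sum ^ (1 / q)} with hS0
  set S1 : Set ℝ := {x | ∃ T, IsTraversal m m T ∧
    x = ((matchedDists σ υ T).map fun t => t ^ q).sum ^ (1 / q)} with hS1
  set S2 : Set ℝ := {x | ∃ T, IsTraversal m m T ∧
    x = ((matchedDists υ τ T).map fun t => t ^ q).sum ^ (1 / q)} with hS2
  have sum_nonneg_aux : ∀ {α : Type} (l : List α) (g : α → ℝ),
      (∀ t, 0 ≤ g t) → (0:ℝ) ≤ (l.map g).sum := by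
    intro α l g hg
    apply List.sum_nonneg
    intro a ha
    simp only [mem_map] at ha
    obtain ⟨t, _, rfl⟩ := ha
    exact hg t
  have hbdd : BddBelow S0 := by
    refine ⟨0, fun x hx => ?_⟩
    obtain ⟨T', _, rfl⟩ := hx
    apply Real.rpow_nonneg
    rw [matchedDists, map_map]
    exact sum_nonneg_aux _ _ (fun p => Real.rpow_nonneg dist_nonneg q)
  have hS1ne : S1.Nonempty := ⟨_, _, diag_isTraversal m hm, rfl⟩
  have hS2ne : S2.Nonempty := ⟨_, _, diag_isTraversal m hm, rfl⟩
  have key : ∀ x ∈ S1, ∀ y ∈ S2, DTWq q σ τ m m ≤ c * (x + y) := by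
    rintro x ⟨T1, hT1, rfl⟩ y ⟨T2, hT2, rfl⟩
    obtain ⟨hne1, hh1, hgl1, hb1, hch1⟩ := hT1
    obtain ⟨hne2, hh2, hgl2, hb2, hch2⟩ := hT2
    set L := comp T1 T2 with hL
    set T := dd (L.map fun t => (t.1, t.2.2)) with hT
    obtain ⟨t1h, t1t, rfl⟩ : ∃ a l, T1 = a :: l := by
      cases T1 with
      | nil => exact absurd rfl hne1
      | cons a l => exact ⟨_, _, rfl⟩
    obtain ⟨t2h, t2t, rfl⟩ : ∃ a l, T2 = a :: l := by
      cases T2 with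
      | nil => exact absurd rfl hne2
      | cons a l => exact ⟨_, _, rfl⟩
    have h1h : t1h = (0, 0) := by simpa using hh1
    have h2h : t2h = (0, 0) := by simpa using hh2
    have hLcons : ∃ L', L = (t1h.1, t1h.2, t2h.2) :: L' := comp_cons _ _ _ _
    have hLne : L ≠ [] := by
      obtain ⟨L', hL'⟩ := hLcons
      rw [hL']
      simp
    have hTtrav : IsTraversal m m T := by
      refine ⟨?_, ?_, ?_, ?_, ?_⟩
      · apply dd_ne_nil
        simp [hLne]
      · rw [hT, dd_head?, head?_map, hL, comp_head?, h1h, h2h]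
        rfl
      · rw [hT, dd_getLast?, getLast?_map]
        obtain ⟨k, hk⟩ := comp_getLast? _ _ _ _ hgl1 hgl2
        rw [← hL] at hk
        rw [hk]
        rfl
      · intro p hp
        have hp' : p ∈ L.map fun t => (t.1, t.2.2) := (dd_sublist _).subset hp
        simp only [mem_map] at hp'
        obtain ⟨t, ht, rfl⟩ := hp'
        rw [hL] at ht
        obtain ⟨⟨a, ha, h1⟩, ⟨b, hb, h2⟩⟩ := comp_mem _ _ t ht
        exact ⟨h1 ▸ (hb1 a ha).1, h2 ▸ (hb2 b hb).2⟩
      · exact dd_chain' _ _ (comp_chain' _ _ hch1 hch2)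
    have hD : DTWq q σ τ m m ≤ ((matchedDists σ τ T).map fun t => t ^ q).sum ^ (1 / q) :=
      csInf_le hbdd ⟨T, hTtrav, rfl⟩
    refine hD.trans ?_
    have e01 : ((matchedDists σ τ T).map fun t => t ^ q).sum
        = (T.map fun p => dist (σ p.1) (τ p.2) ^ q).sum := by
      rw [matchedDists, map_map]; rfl
    have e1 : (T.map fun p => dist (σ p.1) (τ p.2) ^ q).sum
        ≤ (L.map fun t => dist (σ t.1) (τ t.2.2) ^ q).sum := by
      have hsub : (T.map fun p => dist (σ p.1) (τ p.2) ^ q)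
          <+ ((L.map fun t => (t.1, t.2.2)).map fun p => dist (σ p.1) (τ p.2) ^ q) :=
        (dd_sublist _).map _
      rw [map_map] at hsub
      refine List.Sublist.sum_le_sum hsub ?_
      intro a ha
      simp only [mem_map] at ha
      obtain ⟨t, _, rfl⟩ := ha
      exact Real.rpow_nonneg dist_nonneg q
    have e3 : (L.map fun t => dist (σ t.1) (τ t.2.2) ^ q).sum
        ≤ (L.map fun t => (dist (σ t.1) (υ t.2.1) + dist (υ t.2.1) (τ t.2.2)) ^ q).sum := by
      apply List.sum_le_sum
      intro t _
      exact Real.rpow_le_rpow dist_nonneg (dist_triangle _ _ _) hq0.le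
    have e4 : ((L.map fun t => (dist (σ t.1) (υ t.2.1) + dist (υ t.2.1) (τ t.2.2)) ^ q).sum) ^ (1/q)
        ≤ ((L.map fun t => dist (σ t.1) (υ t.2.1) ^ q).sum) ^ (1/q)
          + ((L.map fun t => dist (υ t.2.1) (τ t.2.2) ^ q).sum) ^ (1/q) := by
      rw [list_sum_getD L (fun t => (dist (σ t.1) (υ t.2.1) + dist (υ t.2.1) (τ t.2.2)) ^ q),
        list_sum_getD L (fun t => dist (σ t.1) (υ t.2.1) ^ q),
        list_sum_getD L (fun t => dist (υ t.2.1) (τ t.2.2) ^ q)]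
      exact Real.Lp_add_le_of_nonneg (s := Finset.range L.length)
        (f := fun i => dist (σ (L.getD i (0,0,0)).1) (υ (L.getD i (0,0,0)).2.1))
        (g := fun i => dist (υ (L.getD i (0,0,0)).2.1) (τ (L.getD i (0,0,0)).2.2)) hq
        (fun i _ => dist_nonneg) (fun i _ => dist_nonneg)
    have e6 : (L.map fun t => dist (σ t.1) (υ t.2.1) ^ q).sum
        ≤ m * (((t1h :: t1t)).map fun p => dist (σ p.1) (υ p.2) ^ q).sum := by
      have hkey := comp_sumA (fun p => dist (σ p.1) (υ p.2) ^ q)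
        (fun p => Real.rpow_nonneg dist_nonneg q) m (t1h :: t1t) (t2h :: t2t)
        hch1 hch2 hb1 hb2 hgl1 hgl2 t1h t2h rfl rfl (by rw [h1h, h2h])
      rw [tail_cons] at hkey
      rw [map_cons, sum_cons, mul_add]
      have h20 : t2h.2 = 0 := by rw [h2h]
      rw [h20, Nat.sub_zero] at hkey
      exact hkey
    have e7 : (L.map fun t => dist (υ t.2.1) (τ t.2.2) ^ q).sum
        ≤ m * (((t2h :: t2t)).map fun p => dist (υ p.1) (τ p.2) ^ q).sum := by
      have hkey := comp_sumB (fun p => dist (υ p.1) (τ p.2) ^ q)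
        (fun p => Real.rpow_nonneg dist_nonneg q) m (t1h :: t1t) (t2h :: t2t)
        hch1 hch2 hb1 hb2 hgl1 hgl2 t1h t2h rfl rfl (by rw [h1h, h2h])
      rw [tail_cons] at hkey
      rw [map_cons, sum_cons, mul_add]
      have h10 : t1h.1 = 0 := by rw [h1h]
      rw [h10, Nat.sub_zero] at hkey
      exact hkey
    have hx : ((matchedDists σ υ (t1h :: t1t)).map fun t => t ^ q).sum
        = (((t1h :: t1t)).map fun p => dist (σ p.1) (υ p.2) ^ q).sum := by
      rw [matchedDists, map_map]; rfl
    have hy : ((matchedDists υ τ (t2h :: t2t)).map fun t => t ^ q).sum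
        = (((t2h :: t2t)).map fun p => dist (υ p.1) (τ p.2) ^ q).sum := by
      rw [matchedDists, map_map]; rfl
    have hxnn := sum_nonneg_aux (t1h :: t1t) (fun p => dist (σ p.1) (υ p.2) ^ q)
      (fun p => Real.rpow_nonneg dist_nonneg q)
    have hynn := sum_nonneg_aux (t2h :: t2t) (fun p => dist (υ p.1) (τ p.2) ^ q)
      (fun p => Real.rpow_nonneg dist_nonneg q)
    calc ((matchedDists σ τ T).map fun t => t ^ q).sum ^ (1 / q)
        ≤ ((L.map fun t => (dist (σ t.1) (υ t.2.1) + dist (υ t.2.1) (τ t.2.2)) ^ q).sum) ^ (1/q) := by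
          apply Real.rpow_le_rpow _ _ h1q
          · rw [e01]
            exact sum_nonneg_aux _ _ (fun p => Real.rpow_nonneg dist_nonneg q)
          · rw [e01]; exact e1.trans e3
      _ ≤ ((L.map fun t => dist (σ t.1) (υ t.2.1) ^ q).sum) ^ (1/q)
          + ((L.map fun t => dist (υ t.2.1) (τ t.2.2) ^ q).sum) ^ (1/q) := e4
      _ ≤ (↑m * (((t1h :: t1t)).map fun p => dist (σ p.1) (υ p.2) ^ q).sum) ^ (1/q)
          + (↑m * (((t2h :: t2t)).map fun p => dist (υ p.1) (τ p.2) ^ q).sum) ^ (1/q) :=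
          add_le_add
            (Real.rpow_le_rpow
              (sum_nonneg_aux _ _ (fun t => Real.rpow_nonneg dist_nonneg q)) e6 h1q)
            (Real.rpow_le_rpow
              (sum_nonneg_aux _ _ (fun t => Real.rpow_nonneg dist_nonneg q)) e7 h1q)
      _ = c * ((((t1h :: t1t)).map fun p => dist (σ p.1) (υ p.2) ^ q).sum ^ (1/q))
          + c * ((((t2h :: t2t)).map fun p => dist (υ p.1) (τ p.2) ^ q).sum ^ (1/q)) := by
          rw [Real.mul_rpow (le_of_lt hm0) hxnn, Real.mul_rpow (le_of_lt hm0) hynn]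
      _ = c * (((matchedDists σ υ (t1h :: t1t)).map fun t => t ^ q).sum ^ (1 / q)
          + ((matchedDists υ τ (t2h :: t2t)).map fun t => t ^ q).sum ^ (1 / q)) := by
          rw [hx, hy]; ring
  have hDsu : DTWq q σ υ m m = sInf S1 := rfl
  have hDut : DTWq q υ τ m m = sInf S2 := rfl
  have step1 : ∀ y ∈ S2, DTWq q σ τ m m ≤ c * (DTWq q σ υ m m + y) := by
    intro y hy
    have h2 : DTWq q σ τ m m / c - y ≤ sInf S1 := by
      apply le_csInf hS1ne
      intro x hx
      rw [sub_le_iff_le_add, div_le_iff₀' hcpos]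
      exact key x hx y hy
    rw [← hDsu] at h2
    rw [sub_le_iff_le_add, div_le_iff₀' hcpos] at h2
    exact h2
  have h3 : DTWq q σ τ m m / c - DTWq q σ υ m m ≤ sInf S2 := by
    apply le_csInf hS2ne
    intro y hy
    rw [sub_le_iff_le_add, div_le_iff₀' hcpos]
    exact (step1 y hy).trans (le_of_eq (by ring))
  rw [← hDut] at h3
  rw [sub_le_iff_le_add, div_le_iff₀' hcpos] at h3
  calc DTWq q σ τ m m ≤ c * (DTWq q υ τ m m + DTWq q σ υ m m) := h3
    _ = c * (DTWq q σ υ m m + DTWq q υ τ m m) := by ring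
end

section
/- For any traversal T of curves σ and ψ with vertices in ℝ^d, and any curve ψ' whose j-th vertex is within distance ε' of the j-th vertex of ψ for all j, the l-th largest matched distance satisfies |s_l^T − s_l^{T{ψ'}}| ≤ ε' for all l ∈ [|T|], where T{ψ'} denotes the traversal T applied to σ and ψ' instead of ψ. Consequently |d_kDTW(σ,ψ) − d_kDTW(σ,ψ')| ≤ k·ε'. -/
open List

private lemma close_insert (ε : ℝ) :
    ∀ u v : List ℝ, u.Pairwise (· ≥ ·) → v.Pairwise (· ≥ ·) →
      Forall₂ (fun a b => |a - b| ≤ ε) u v → ∀ x y : ℝ, |x - y| ≤ ε →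
      Forall₂ (fun a b => |a - b| ≤ ε) (u.orderedInsert (· ≥ ·) x) (v.orderedInsert (· ≥ ·) y)
  | [], [], _, _, _, x, y, hxy => by
      simpa [orderedInsert] using hxy
  | u0 :: u', v0 :: v', hu, hv, h, x, y, hxy => by
      rcases forall₂_cons.1 h with ⟨h0, h'⟩
      have hu' := hu.of_cons
      have hv' := hv.of_cons
      have habs0 := abs_sub_le_iff.1 h0
      have habsxy := abs_sub_le_iff.1 hxy
      have hins_u : u'.orderedInsert (· ≥ ·) u0 = u0 :: u' := by
        cases u' with
        | nil => rfl
        | cons a t =>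
          have : u0 ≥ a := rel_of_pairwise_cons hu (show a ∈ a :: t by simp)
          simp [orderedInsert, this]
      have hins_v : v'.orderedInsert (· ≥ ·) v0 = v0 :: v' := by
        cases v' with
        | nil => rfl
        | cons a t =>
          have : v0 ≥ a := rel_of_pairwise_cons hv (show a ∈ a :: t by simp)
          simp [orderedInsert, this]
      by_cases hx : x ≥ u0 <;> by_cases hy : y ≥ v0
      · simp only [orderedInsert, if_pos hx, if_pos hy]
        exact Forall₂.cons hxy h
      · simp only [orderedInsert, if_pos hx, if_neg hy]
        push_neg at hy
        refine Forall₂.cons ?_ ?_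
        · rw [abs_sub_le_iff]
          constructor
          · linarith
          · linarith
        · rw [← hins_u]
          refine close_insert ε u' v' hu' hv' h' u0 y ?_
          rw [abs_sub_le_iff]
          constructor
          · linarith
          · linarith
      · simp only [orderedInsert, if_neg hx, if_pos hy]
        push_neg at hx
        refine Forall₂.cons ?_ ?_
        · rw [abs_sub_le_iff]
          constructor
          · linarith
          · linarith
        · rw [← hins_v]
          refine close_insert ε u' v' hu' hv' h' x v0 ?_
          rw [abs_sub_le_iff]
          constructor
          · linarith
          · linarith
      · simp only [orderedInsert, if_neg hx, if_neg hy]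
        exact Forall₂.cons h0 (close_insert ε u' v' hu' hv' h' x y hxy)

private lemma close_sort (ε : ℝ) :
    ∀ {a b : List ℝ}, Forall₂ (fun x y => |x - y| ≤ ε) a b →
      Forall₂ (fun x y => |x - y| ≤ ε) (a.insertionSort (· ≥ ·)) (b.insertionSort (· ≥ ·)) := by
  intro a b h
  induction h with
  | nil => simp [insertionSort]
  | cons hxy h ih =>
      exact close_insert ε _ _ (pairwise_insertionSort _ _) (pairwise_insertionSort _ _) ih _ _ hxy

private lemma close_getD (ε : ℝ) :
    ∀ {a b : List ℝ}, Forall₂ (fun x y => |x - y| ≤ ε) a b →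
      ∀ i, i < a.length → |a.getD i 0 - b.getD i 0| ≤ ε := by
  intro a b h
  induction h with
  | nil => simp
  | cons hxy h ih =>
      intro i hi
      cases i with
      | zero => simpa using hxy
      | succ n => simpa using ih n (by simpa using hi)

private lemma close_sum (ε : ℝ) (hε : 0 ≤ ε) :
    ∀ {a b : List ℝ}, Forall₂ (fun x y => |x - y| ≤ ε) a b →
      |a.sum - b.sum| ≤ a.length * ε := by
  intro a b h
  induction h with
  | nil => simp
  | @cons x y a b hxy h ih =>
      have h1 := abs_sub_le_iff.1 hxy
      have h2 := abs_sub_le_iff.1 ih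
      simp only [sum_cons, length_cons, abs_sub_le_iff]
      push_cast
      constructor <;> nlinarith

private lemma exists_traversal (m' m'' : ℕ) (hm' : 1 ≤ m') (hm'' : 1 ≤ m'') :
    ∃ T, IsTraversal m' m'' T := by
  classical
  set n := max m' m'' with hn
  have hn1 : 1 ≤ n := le_trans hm' (le_max_left _ _)
  refine ⟨(range n).map (fun i => (min i (m' - 1), min i (m'' - 1))), ?_, ?_, ?_, ?_, ?_⟩
  · simp [hn]; omega
  · obtain ⟨n', hn'⟩ : ∃ n', n = n' + 1 := ⟨n - 1, by omega⟩
    rw [hn']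
    simp [range_succ_eq_map]
  · obtain ⟨n', hn'⟩ : ∃ n', n = n' + 1 := ⟨n - 1, by omega⟩
    rw [hn']
    rw [range_succ, map_append]
    simp only [map_cons, map_nil, getLast?_concat]
    have h1 : min n' (m' - 1) = m' - 1 := by omega
    have h2 : min n' (m'' - 1) = m'' - 1 := by omega
    rw [h1, h2]
  · intro p hp
    simp only [mem_map, mem_range] at hp
    obtain ⟨i, _, rfl⟩ := hp
    constructor <;> simp <;> omega
  · show List.IsChain _ _
    rw [List.isChain_map]
    obtain ⟨n', hn'⟩ : ∃ n', n = n' + 1 := ⟨n - 1, by omega⟩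
    rw [hn']
    rw [isChain_range_succ]
    intro i hi
    simp only [Prod.ext_iff, Prod.mk.injEq]
    omega

/-- perturbing each vertex of `ψ` by at most `ε'` changes every order
statistic of the matched distances of a traversal by at most `ε'`, and hence the
`k`-DTW distance by at most `k·ε'`. -/
theorem kDTW_vertex_perturbation {d : ℕ} (k m' m'' : ℕ) (hm' : 1 ≤ m') (hm'' : 1 ≤ m'')
    (σ ψ ψ' : ℕ → EuclideanSpace ℝ (Fin d)) (ε' : ℝ)
    (hψ : ∀ j < m'', dist (ψ j) (ψ' j) ≤ ε') :
    (∀ T : List (ℕ × ℕ), IsTraversal m' m'' T →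
      ∀ l, 1 ≤ l → l ≤ T.length →
        |((matchedDists σ ψ T).insertionSort (· ≥ ·)).getD (l - 1) 0 -
          ((matchedDists σ ψ' T).insertionSort (· ≥ ·)).getD (l - 1) 0| ≤ ε') ∧
    |kDTW k σ ψ m' m'' - kDTW k σ ψ' m' m''| ≤ (k : ℝ) * ε' := by
  have hε : 0 ≤ ε' := le_trans dist_nonneg (hψ 0 hm'')
  have hclose : ∀ T : List (ℕ × ℕ), IsTraversal m' m'' T →
      Forall₂ (fun x y => |x - y| ≤ ε') (matchedDists σ ψ T) (matchedDists σ ψ' T) := by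
    intro T hT
    unfold matchedDists
    rw [forall₂_map_left_iff, forall₂_map_right_iff, forall₂_same]
    intro p hp
    have hp2 := (hT.2.2.2.1 p hp).2
    calc |dist (σ p.1) (ψ p.2) - dist (σ p.1) (ψ' p.2)| ≤ dist (ψ p.2) (ψ' p.2) := by
          rw [dist_comm (σ p.1) (ψ p.2), dist_comm (σ p.1) (ψ' p.2)]
          exact abs_dist_sub_le _ _ _
      _ ≤ ε' := hψ p.2 hp2
  constructor
  · intro T hT l hl1 hl2
    refine close_getD ε' (close_sort ε' (hclose T hT)) (l - 1) ?_
    rw [length_insertionSort]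
    unfold matchedDists
    rw [length_map]
    omega
  · have key : ∀ T : List (ℕ × ℕ), IsTraversal m' m'' T →
        |topkSum k (matchedDists σ ψ T) - topkSum k (matchedDists σ ψ' T)| ≤ (k : ℝ) * ε' := by
      intro T hT
      have h1 := close_sum ε' hε (forall₂_take k (close_sort ε' (hclose T hT)))
      refine le_trans h1 (mul_le_mul_of_nonneg_right ?_ hε)
      rw [length_take]
      exact_mod_cast min_le_left _ _
    have htopk : ∀ (τ : ℕ → EuclideanSpace ℝ (Fin d)) (T : List (ℕ × ℕ)),
        0 ≤ topkSum k (matchedDists σ τ T) := by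
      intro τ T
      apply List.sum_nonneg
      intro x hx
      have hx' := (perm_insertionSort (· ≥ ·) (matchedDists σ τ T)).subset
        (mem_of_mem_take hx)
      unfold matchedDists at hx'
      rw [mem_map] at hx'
      obtain ⟨p, _, rfl⟩ := hx'
      exact dist_nonneg
    obtain ⟨T0, hT0⟩ := exists_traversal m' m'' hm' hm''
    have hne : ∀ τ : ℕ → EuclideanSpace ℝ (Fin d),
        {x | ∃ T, IsTraversal m' m'' T ∧ x = topkSum k (matchedDists σ τ T)}.Nonempty :=
      fun τ => ⟨_, T0, hT0, rfl⟩
    have hbdd : ∀ τ : ℕ → EuclideanSpace ℝ (Fin d),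
        BddBelow {x | ∃ T, IsTraversal m' m'' T ∧ x = topkSum k (matchedDists σ τ T)} := by
      intro τ
      refine ⟨0, fun x hx => ?_⟩
      obtain ⟨T, _, rfl⟩ := hx
      exact htopk τ T
    have h1 : kDTW k σ ψ m' m'' - (k : ℝ) * ε' ≤ kDTW k σ ψ' m' m'' := by
      unfold kDTW
      refine le_csInf (hne ψ') ?_
      rintro x ⟨T, hT, rfl⟩
      have hle : sInf {x | ∃ T, IsTraversal m' m'' T ∧ x = topkSum k (matchedDists σ ψ T)}
          ≤ topkSum k (matchedDists σ ψ T) := csInf_le (hbdd ψ) ⟨T, hT, rfl⟩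
      have hk := abs_sub_le_iff.1 (key T hT)
      linarith [hk.1, hk.2]
    have h2 : kDTW k σ ψ' m' m'' - (k : ℝ) * ε' ≤ kDTW k σ ψ m' m'' := by
      unfold kDTW
      refine le_csInf (hne ψ) ?_
      rintro x ⟨T, hT, rfl⟩
      have hle : sInf {x | ∃ T, IsTraversal m' m'' T ∧ x = topkSum k (matchedDists σ ψ' T)}
          ≤ topkSum k (matchedDists σ ψ' T) := csInf_le (hbdd ψ') ⟨T, hT, rfl⟩
      have hk := abs_sub_le_iff.1 (key T hT)
      linarith [hk.1, hk.2]
    rw [abs_sub_le_iff]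
    constructor <;> linarith
end
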